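/- With H, S, F, λ₁, τ, K, L as in the context, for all x, y ∈ H one has ‖S(x + τ F(x)) − S(y + τ F(y))‖² ≤ e^{−2 λ₁ τ} (1 + 2Kτ + L² τ²) ‖x − y‖². -/

import Mathlib

open MeasureTheory

/-- One-step contraction estimate from the proof of Proposition 2.6 of the paper:
`‖S(x + τF(x)) − S(y + τF(y))‖² ≤ e^{−2λ₁τ}(1 + 2Kτ + L²τ²)‖x − y‖²`. -/
theorem stmt_3 {H : Type*} [NormedAddCommGroup H] [InnerProductSpace ℝ H]
    (S : H →L[ℝ] H) (F : H → H) (lam1 τ K L : ℝ)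
    (hlam1 : 0 < lam1) (hτ : 0 < τ)
    (hS : ∀ x : H, ‖S x‖ ≤ Real.exp (-lam1 * τ) * ‖x‖)
    (hK : K < lam1)
    (hF1 : ∀ x y : H, (inner ℝ (x - y) (F x - F y) : ℝ) ≤ K * ‖x - y‖ ^ 2)
    (hL : 0 < L)
    (hF2 : ∀ x y : H, ‖F x - F y‖ ≤ L * ‖x - y‖)
    (x y : H) :
    ‖S (x + τ • F x) - S (y + τ • F y)‖ ^ 2 ≤
      Real.exp (-2 * lam1 * τ) * (1 + 2 * K * τ + L ^ 2 * τ ^ 2) * ‖x - y‖ ^ 2 := by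
  have h1 : S (x + τ • F x) - S (y + τ • F y) = S ((x - y) + τ • (F x - F y)) := by
    rw [← map_sub]; congr 1; rw [smul_sub]; abel
  set u := (x - y) + τ • (F x - F y) with hu
  have h2 : ‖S u‖ ≤ Real.exp (-lam1 * τ) * ‖u‖ := hS u
  have hnn : (0:ℝ) ≤ Real.exp (-lam1 * τ) * ‖u‖ :=
    mul_nonneg (Real.exp_pos _).le (norm_nonneg _)
  have h3 : ‖S u‖ ^ 2 ≤ Real.exp (-2 * lam1 * τ) * ‖u‖ ^ 2 := by
    calc ‖S u‖ ^ 2 ≤ (Real.exp (-lam1 * τ) * ‖u‖) ^ 2 := by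
          exact pow_le_pow_left₀ (norm_nonneg _) h2 2
      _ = Real.exp (-2 * lam1 * τ) * ‖u‖ ^ 2 := by
          rw [mul_pow, ← Real.exp_nat_mul]; ring_nf
  have h4 : ‖u‖ ^ 2 ≤ (1 + 2 * K * τ + L ^ 2 * τ ^ 2) * ‖x - y‖ ^ 2 := by
    have hexp : ‖u‖ ^ 2 = ‖x - y‖ ^ 2 + 2 * τ * (inner ℝ (x - y) (F x - F y) : ℝ)
        + τ ^ 2 * ‖F x - F y‖ ^ 2 := by
      rw [hu, @norm_add_sq_real, inner_smul_right, norm_smul, Real.norm_eq_abs,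
        abs_of_pos hτ, mul_pow]
      ring
    have hFn : ‖F x - F y‖ ^ 2 ≤ L ^ 2 * ‖x - y‖ ^ 2 := by
      have := pow_le_pow_left₀ (norm_nonneg _) (hF2 x y) 2
      calc ‖F x - F y‖ ^ 2 ≤ (L * ‖x - y‖) ^ 2 := this
        _ = L ^ 2 * ‖x - y‖ ^ 2 := by ring
    have hi := hF1 x y
    nlinarith [sq_nonneg τ, hτ.le]
  rw [h1]
  calc ‖S u‖ ^ 2 ≤ Real.exp (-2 * lam1 * τ) * ‖u‖ ^ 2 := h3
    _ ≤ Real.exp (-2 * lam1 * τ) * ((1 + 2 * K * τ + L ^ 2 * τ ^ 2) * ‖x - y‖ ^ 2) :=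
        mul_le_mul_of_nonneg_left h4 (Real.exp_pos _).le
    _ = _ := by ring
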